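/- Let X and Y be geodesic δ-hyperbolic metric spaces and φ: X → Y a (λ,ε)-quasi-isometric embedding. There exists a constant C depending only on δ, λ, ε such that: if p ∈ X lies within distance 5δ of all three sides of a geodesic triangle △(a,b,c) in X, then φ(p) lies within distance C of all three sides of any geodesic triangle △(φ(a),φ(b),φ(c)) in Y. -/

import Mathlib

open Metric Set

def IsGeodesic {X : Type*} [MetricSpace X] (γ : ℝ → X) (a b : X) : Prop :=
  γ 0 = a ∧ γ (dist a b) = b ∧
    ∀ s ∈ Set.Icc (0:ℝ) (dist a b), ∀ t ∈ Set.Icc (0:ℝ) (dist a b),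
      dist (γ s) (γ t) = |s - t|

def GeodSide {X : Type*} [MetricSpace X] (γ : ℝ → X) (a b : X) : Set X :=
  γ '' Set.Icc (0:ℝ) (dist a b)

def GeodesicSpace (X : Type*) [MetricSpace X] : Prop :=
  ∀ a b : X, ∃ γ : ℝ → X, IsGeodesic γ a b

def SlimTriangle {X : Type*} [MetricSpace X] (δ : ℝ) (a b c : X) (f g h : ℝ → X) : Prop :=
  (∀ p ∈ GeodSide f a b, Metric.infDist p (GeodSide g b c ∪ GeodSide h a c) ≤ δ) ∧
  (∀ p ∈ GeodSide g b c, Metric.infDist p (GeodSide f a b ∪ GeodSide h a c) ≤ δ) ∧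
  (∀ p ∈ GeodSide h a c, Metric.infDist p (GeodSide f a b ∪ GeodSide g b c) ≤ δ)

def DeltaHyperbolic (X : Type*) [MetricSpace X] (δ : ℝ) : Prop :=
  ∀ (a b c : X) (f g h : ℝ → X),
    IsGeodesic f a b → IsGeodesic g b c → IsGeodesic h a c →
      SlimTriangle δ a b c f g h

noncomputable def gromovProd {X : Type*} [MetricSpace X] (a c b : X) : ℝ :=
  (dist a b + dist c b - dist a c) / 2

noncomputable def crossRatio {X : Type*} [MetricSpace X] (a b c d : X) : ℝ :=
  (dist a d - dist d c + dist b c - dist a b) / 2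

def IsQuasigeodesic {X : Type*} [MetricSpace X] (lam eps : ℝ) (γ : ℝ → X) (L : ℝ) : Prop :=
  ∀ s ∈ Set.Icc (0:ℝ) L, ∀ t ∈ Set.Icc (0:ℝ) L,
    |s - t| / lam - eps ≤ dist (γ s) (γ t) ∧ dist (γ s) (γ t) ≤ lam * |s - t| + eps

def QIEmbedding {X Y : Type*} [MetricSpace X] [MetricSpace Y] (lam eps : ℝ) (φ : X → Y) : Prop :=
  ∀ x x' : X, dist x x' / lam - eps ≤ dist (φ x) (φ x') ∧
    dist (φ x) (φ x') ≤ lam * dist x x' + eps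

-- helpers
lemma myLeInfDist {Y : Type*} [MetricSpace Y] {s : Set Y} (hs : s.Nonempty) {x : Y} {b : ℝ}
    (h : ∀ y ∈ s, b ≤ dist x y) : b ≤ Metric.infDist x s := by
  by_contra hc
  push_neg at hc
  obtain ⟨y, hy, hd⟩ := (Metric.infDist_lt_iff hs).1 hc
  exact absurd (h y hy) (by linarith)

lemma side_nonempty {Y : Type*} [MetricSpace Y] {γ : ℝ → Y} {a b : Y}
    (h : IsGeodesic γ a b) : (GeodSide γ a b).Nonempty :=
  ⟨a, 0, ⟨le_refl _, dist_nonneg⟩, h.1⟩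

lemma mem_side_left {Y : Type*} [MetricSpace Y] {γ : ℝ → Y} {a b : Y}
    (h : IsGeodesic γ a b) : a ∈ GeodSide γ a b :=
  ⟨0, ⟨le_refl _, dist_nonneg⟩, h.1⟩

lemma mem_side_right {Y : Type*} [MetricSpace Y] {γ : ℝ → Y} {a b : Y}
    (h : IsGeodesic γ a b) : b ∈ GeodSide γ a b :=
  ⟨dist a b, ⟨dist_nonneg, le_refl _⟩, h.2.1⟩

lemma dist_start_of_mem_side {Y : Type*} [MetricSpace Y] {γ : ℝ → Y} {a b : Y}
    (h : IsGeodesic γ a b) {w : Y} (hw : w ∈ GeodSide γ a b) : dist a w ≤ dist a b := by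
  obtain ⟨s, hs, rfl⟩ := hw
  have := h.2.2 0 ⟨le_refl _, dist_nonneg⟩ s hs
  rw [← h.1] at *
  rw [this]
  rw [abs_of_nonpos (by linarith [hs.1])]
  linarith [hs.2]

lemma sq_le_four_two_pow (m : ℕ) : (m+1)^2 ≤ 4 * 2^m := by
  induction m with
  | zero => decide
  | succ n ih =>
    rcases Nat.lt_or_ge n 2 with h | h
    · interval_cases n <;> decide
    · have h1 : (n+1+1)^2 ≤ 2*(n+1)^2 := by nlinarith
      calc (n+1+1)^2 ≤ 2*(n+1)^2 := h1
        _ ≤ 2*(4*2^n) := by omega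
        _ = 4*2^(n+1) := by ring

lemma chainA {Y : Type*} [MetricSpace Y] {δ : ℝ} (hδ : 0 ≤ δ)
    (geodY : GeodesicSpace Y) (hypY : DeltaHyperbolic Y δ)
    {d₀ : ℝ} (hd₀ : 0 ≤ d₀) :
    ∀ (k n : ℕ), n ≤ 2 ^ k → ∀ (p : ℕ → Y),
      (∀ i < n, dist (p i) (p (i + 1)) ≤ d₀) →
      ∀ (σ : ℝ → Y), IsGeodesic σ (p 0) (p n) →
      ∀ m ∈ GeodSide σ (p 0) (p n),
      Metric.infDist m (p '' Set.Iic n) ≤ k * δ + d₀ := by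
  intro k
  induction k with
  | zero =>
    intro n hn p hp σ hσ m hm
    interval_cases n
    · obtain ⟨s, hs, rfl⟩ := hm
      have h0 : dist (p 0) (p 0) = 0 := dist_self _
      have hs0 : s = 0 := le_antisymm (by rw [h0] at hs; exact hs.2) hs.1
      subst hs0
      rw [hσ.1]
      have hmem : p 0 ∈ p '' Set.Iic 0 := ⟨0, Set.mem_Iic.mpr (le_refl _), rfl⟩
      have h2 : Metric.infDist (p 0) (p '' Set.Iic 0) ≤ dist (p 0) (p 0) :=
        Metric.infDist_le_dist_of_mem hmem
      rw [dist_self] at h2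
      have : (0:ℝ) ≤ d₀ := hd₀
      push_cast
      linarith
    · have hd := dist_start_of_mem_side hσ hm
      obtain ⟨s, hs, rfl⟩ := hm
      have hd01 : dist (p 0) (p 1) ≤ d₀ := hp 0 (by norm_num)
      have hmem : p 0 ∈ p '' Set.Iic 1 := ⟨0, Set.mem_Iic.mpr (by norm_num), rfl⟩
      have this : Metric.infDist (σ s) (p '' Set.Iic 1) ≤ dist (σ s) (p 0) :=
        Metric.infDist_le_dist_of_mem hmem
      simp only [Nat.zero_eq, Nat.cast_zero, zero_mul, zero_add]
      calc Metric.infDist (σ s) (p '' Set.Iic 1) ≤ dist (σ s) (p 0) := this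
        _ = dist (p 0) (σ s) := dist_comm _ _
        _ ≤ dist (p 0) (p 1) := hd
        _ ≤ d₀ := hd01
  | succ k ih =>
    intro n hn p hp σ hσ m hm
    rcases le_or_gt n (2^k) with hle | hlt
    · have := ih n hle p hp σ hσ m hm
      have hk : (k:ℝ) * δ ≤ (k+1) * δ := by nlinarith
      push_cast
      push_cast at this
      linarith
    · set j := n / 2 with hj
      have hjle : j ≤ 2 ^ k := by
        have h2 : 2^(k+1) = 2*2^k := by ring
        omega
      have hnj : n - j ≤ 2 ^ k := by
        have h2 : 2^(k+1) = 2*2^k := by ring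
        omega
      obtain ⟨g, hg⟩ := geodY (p n) (p j)
      obtain ⟨h, hh⟩ := geodY (p 0) (p j)
      have slim := (hypY (p 0) (p n) (p j) σ g h hσ hg hh).1 m hm
      -- every point of the union is within k*δ+d₀ of the chain
      have hP : (p '' Set.Iic n).Nonempty := ⟨p 0, 0, Nat.zero_le _, rfl⟩
      have hU : (GeodSide g (p n) (p j) ∪ GeodSide h (p 0) (p j)).Nonempty :=
        ⟨p 0, Or.inr (mem_side_left hh)⟩
      have key : ∀ m' ∈ GeodSide g (p n) (p j) ∪ GeodSide h (p 0) (p j),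
          Metric.infDist m' (p '' Set.Iic n) ≤ k * δ + d₀ := by
        intro m' hm'
        rcases hm' with hm' | hm'
        · -- right subchain reversed
          set q : ℕ → Y := fun i => p (n - i) with hq
          have hq0 : q 0 = p n := by simp [hq]
          have hqn : q (n - j) = p j := by simp [hq, Nat.sub_sub_self (Nat.div_le_self n 2)]; rw [Nat.sub_sub_self (by omega : j ≤ n)]
          have hgaps : ∀ i < n - j, dist (q i) (q (i+1)) ≤ d₀ := by
            intro i hi
            have h1 : n - (i+1) + 1 = n - i := by omega
            have := hp (n - (i+1)) (by omega)
            rw [h1] at this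
            simpa [hq, dist_comm] using this
          have hg' : IsGeodesic g (q 0) (q (n - j)) := by rw [hq0, hqn]; exact hg
          have hm'' : m' ∈ GeodSide g (q 0) (q (n - j)) := by rw [hq0, hqn]; exact hm'
          have := ih (n - j) hnj q hgaps g hg' m' hm''
          have hsub : q '' Set.Iic (n - j) ⊆ p '' Set.Iic n := by
            rintro _ ⟨i, hi, rfl⟩
            have hi' := Set.mem_Iic.mp hi
            exact ⟨n - i, Set.mem_Iic.mpr (by omega), rfl⟩
          have hne : (q '' Set.Iic (n-j)).Nonempty := ⟨q 0, 0, Nat.zero_le _, rfl⟩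
          calc Metric.infDist m' (p '' Set.Iic n)
              ≤ Metric.infDist m' (q '' Set.Iic (n-j)) :=
                Metric.infDist_le_infDist_of_subset hsub hne
            _ ≤ k * δ + d₀ := this
        · -- left subchain
          have hgaps : ∀ i < j, dist (p i) (p (i+1)) ≤ d₀ := by
            intro i hi; exact hp i (by omega)
          have := ih j hjle p hgaps h hh m' hm'
          have hsub : p '' Set.Iic j ⊆ p '' Set.Iic n := by
            rintro _ ⟨i, hi, rfl⟩
            have hi' := Set.mem_Iic.mp hi
            exact ⟨i, Set.mem_Iic.mpr (by omega), rfl⟩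
          have hne : (p '' Set.Iic j).Nonempty := ⟨p 0, 0, Nat.zero_le _, rfl⟩
          calc Metric.infDist m' (p '' Set.Iic n)
              ≤ Metric.infDist m' (p '' Set.Iic j) :=
                Metric.infDist_le_infDist_of_subset hsub hne
            _ ≤ k * δ + d₀ := this
      -- combine
      apply le_of_forall_pos_le_add
      intro η hη
      have : Metric.infDist m (GeodSide g (p n) (p j) ∪ GeodSide h (p 0) (p j)) < δ + η := by
        linarith
      obtain ⟨m', hm', hdm'⟩ := (Metric.infDist_lt_iff hU).1 this
      have h1 : Metric.infDist m (p '' Set.Iic n)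
          ≤ Metric.infDist m' (p '' Set.Iic n) + dist m m' :=
        Metric.infDist_le_infDist_add_dist
      have h2 := key m' hm'
      push_cast
      linarith

noncomputable def Rzero (δ lam eps : ℝ) : ℝ :=
  (24*lam*δ + (4*lam*(6*(lam+eps)+12*δ+14+eps) + 8))*δ + (lam+eps) + 2*δ + 3

lemma Rzero_big {δ lam eps : ℝ} (hδ : 0 ≤ δ) (hlam : 1 ≤ lam) (heps : 0 ≤ eps) :
    0 ≤ (24*lam*δ + (4*lam*(6*(lam+eps)+12*δ+14+eps) + 8)) ∧ lam + eps + 2*δ + 3 ≤ Rzero δ lam eps := by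
  have h1 : 0 ≤ (24*lam*δ + (4*lam*(6*(lam+eps)+12*δ+14+eps) + 8)) := by nlinarith
  refine ⟨h1, ?_⟩
  have h : 0 ≤ (24*lam*δ + (4*lam*(6*(lam+eps)+12*δ+14+eps) + 8))*δ := mul_nonneg h1 hδ
  unfold Rzero
  linarith

set_option maxHeartbeats 2000000 in
lemma morse_upper {Y : Type*} [MetricSpace Y] {δ lam eps : ℝ} (hδ : 0 ≤ δ)
    (hlam : 1 ≤ lam) (heps : 0 ≤ eps)
    (geodY : GeodesicSpace Y) (hypY : DeltaHyperbolic Y δ)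
    {L : ℝ} (hL : 0 ≤ L) {γ : ℝ → Y} (hγ : IsQuasigeodesic lam eps γ L)
    {f' : ℝ → Y} (hf' : IsGeodesic f' (γ 0) (γ L)) :
    ∀ m ∈ GeodSide f' (γ 0) (γ L),
      Metric.infDist m (γ '' Set.Icc 0 L) ≤ Rzero δ lam eps := by
  have hlam0 : (0:ℝ) < lam := by linarith
  set Z := γ '' Set.Icc (0:ℝ) L with hZ
  have hZne : Z.Nonempty := ⟨γ 0, 0, ⟨le_refl _, hL⟩, rfl⟩
  set D' := dist (γ 0) (γ L) with hD'
  have hD'0 : 0 ≤ D' := dist_nonneg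
  have hcont : ContinuousOn f' (Set.Icc 0 D') := by
    refine (LipschitzOnWith.of_dist_le_mul (K := 1) ?_).continuousOn
    intro x hx y hy
    rw [hf'.2.2 x hx y hy, Real.dist_eq]
    simp
  have hcomp : IsCompact (GeodSide f' (γ 0) (γ L)) :=
    isCompact_Icc.image_of_continuousOn hcont
  obtain ⟨m₀, hm₀mem, hmax⟩ :=
    hcomp.exists_isMaxOn (side_nonempty hf') ((Metric.continuous_infDist_pt Z).continuousOn)
  set R := Metric.infDist m₀ Z with hRdef
  suffices key : R ≤ Rzero δ lam eps by
    intro m hm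
    exact le_trans (hmax hm) key
  have hR0 : 0 ≤ R := Metric.infDist_nonneg
  have hZfar : ∀ z ∈ Z, R ≤ dist m₀ z := fun z hz => Metric.infDist_le_dist_of_mem hz
  obtain ⟨u, hu, hm₀⟩ := hm₀mem
  set u₁ := max (u - 2*R) 0 with hu₁def
  set u₂ := min (u + 2*R) D' with hu₂def
  have hu₁mem : u₁ ∈ Set.Icc (0:ℝ) D' :=
    ⟨le_max_right _ _, max_le (by linarith [hu.2]) hD'0⟩
  have hu₂mem : u₂ ∈ Set.Icc (0:ℝ) D' := ⟨le_min (by linarith [hu.1]) hD'0, min_le_right _ _⟩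
  have hu₁u : u₁ ≤ u := max_le (by linarith) hu.1
  have huu₂ : u ≤ u₂ := le_min (by linarith) hu.2
  have h2R₁ : u - u₁ ≤ 2*R := by
    have := le_max_left (u - 2*R) 0; linarith
  have h2R₂ : u₂ - u ≤ 2*R := by
    have := min_le_left (u + 2*R) D'; linarith
  set xb := f' u₁ with hxbdef
  set yb := f' u₂ with hybdef
  have hdxy : dist xb yb = u₂ - u₁ := by
    rw [hf'.2.2 u₁ hu₁mem u₂ hu₂mem, abs_of_nonpos (by linarith)]; ring
  have hdm₀x : dist m₀ xb = u - u₁ := by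
    rw [← hm₀, hf'.2.2 u hu u₁ hu₁mem, abs_of_nonneg (by linarith)]
  have hdm₀y : dist m₀ yb = u₂ - u := by
    rw [← hm₀, hf'.2.2 u hu u₂ hu₂mem, abs_of_nonpos (by linarith)]; ring
  have hmax' : ∀ v ∈ Set.Icc (0:ℝ) D', Metric.infDist (f' v) Z ≤ R := by
    intro v hv
    exact hmax ⟨v, hv, rfl⟩
  -- left point selection
  have hleft : ∃ s₁ ∈ Set.Icc (0:ℝ) L, dist xb (γ s₁) ≤ R + 1 ∧
      (∀ w, dist xb w ≤ dist xb (γ s₁) → R - 1 ≤ dist m₀ w) := by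
    by_cases hcase : u - 2*R ≤ 0
    · have hu₁0 : u₁ = 0 := max_eq_right hcase
      have hxb : xb = γ 0 := by rw [hxbdef, hu₁0, hf'.1]
      refine ⟨0, ⟨le_refl _, hL⟩, ?_, ?_⟩
      · rw [hxb, dist_self]; linarith
      · intro w hw
        rw [hxb, dist_self] at hw
        have hw0 : dist (γ 0) w = 0 := le_antisymm hw dist_nonneg
        have : w = γ 0 := by rw [← dist_eq_zero, dist_comm]; exact hw0
        subst this
        have := hZfar (γ 0) ⟨0, ⟨le_refl _, hL⟩, rfl⟩
        linarith
    · push_neg at hcase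
      have hu₁v : u₁ = u - 2*R := max_eq_left (by linarith)
      have hdm₀x2 : dist m₀ xb = 2*R := by rw [hdm₀x, hu₁v]; ring
      have : Metric.infDist xb Z < R + 1 := lt_of_le_of_lt (hmax' u₁ hu₁mem) (by linarith)
      obtain ⟨z, hz, hdz⟩ := (Metric.infDist_lt_iff hZne).1 this
      obtain ⟨s₁, hs₁, rfl⟩ := hz
      refine ⟨s₁, hs₁, le_of_lt hdz, ?_⟩
      intro w hw
      have : dist m₀ xb ≤ dist m₀ w + dist w xb := dist_triangle _ _ _
      rw [dist_comm w xb] at this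
      have hwx : dist xb w ≤ R + 1 := le_trans hw (le_of_lt hdz)
      linarith
  -- right point selection
  have hright : ∃ s₂ ∈ Set.Icc (0:ℝ) L, dist yb (γ s₂) ≤ R + 1 ∧
      (∀ w, dist yb w ≤ dist yb (γ s₂) → R - 1 ≤ dist m₀ w) := by
    by_cases hcase : D' ≤ u + 2*R
    · have hu₂0 : u₂ = D' := min_eq_right hcase
      have hyb : yb = γ L := by rw [hybdef, hu₂0, hf'.2.1]
      refine ⟨L, ⟨hL, le_refl _⟩, ?_, ?_⟩
      · rw [hyb, dist_self]; linarith
      · intro w hw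
        rw [hyb, dist_self] at hw
        have hw0 : dist (γ L) w = 0 := le_antisymm hw dist_nonneg
        have : w = γ L := by rw [← dist_eq_zero, dist_comm]; exact hw0
        subst this
        have := hZfar (γ L) ⟨L, ⟨hL, le_refl _⟩, rfl⟩
        linarith
    · push_neg at hcase
      have hu₂v : u₂ = u + 2*R := min_eq_left (by linarith)
      have hdm₀y2 : dist m₀ yb = 2*R := by rw [hdm₀y, hu₂v]; ring
      have : Metric.infDist yb Z < R + 1 := lt_of_le_of_lt (hmax' u₂ hu₂mem) (by linarith)
      obtain ⟨z, hz, hdz⟩ := (Metric.infDist_lt_iff hZne).1 this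
      obtain ⟨s₂, hs₂, rfl⟩ := hz
      refine ⟨s₂, hs₂, le_of_lt hdz, ?_⟩
      intro w hw
      have : dist m₀ yb ≤ dist m₀ w + dist w yb := dist_triangle _ _ _
      rw [dist_comm w yb] at this
      have hwy : dist yb w ≤ R + 1 := le_trans hw (le_of_lt hdz)
      linarith
  obtain ⟨s₁, hs₁, hdx', hfar₁⟩ := hleft
  obtain ⟨s₂, hs₂, hdy', hfar₂⟩ := hright
  set xp := γ s₁ with hxpdef
  set yp := γ s₂ with hypdef
  -- the sub-geodesic from xb to yb containing m₀
  set σb : ℝ → Y := fun t => f' (u₁ + t) with hσbdef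
  have hσb : IsGeodesic σb xb yb := by
    refine ⟨by simp [hσbdef, hxbdef], ?_, ?_⟩
    · rw [hdxy]; show f' (u₁ + (u₂ - u₁)) = yb; rw [show u₁ + (u₂ - u₁) = u₂ by ring]
    · intro s hs t ht
      rw [hdxy] at hs ht
      have hmem1 : u₁ + s ∈ Set.Icc (0:ℝ) D' :=
        ⟨by have := hu₁mem.1; linarith [hs.1], by linarith [hs.2, hu₂mem.2]⟩
      have hmem2 : u₁ + t ∈ Set.Icc (0:ℝ) D' :=
        ⟨by have := hu₁mem.1; linarith [ht.1], by linarith [ht.2, hu₂mem.2]⟩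
      show dist (f' (u₁ + s)) (f' (u₁ + t)) = |s - t|
      rw [hf'.2.2 _ hmem1 _ hmem2]
      congr 1; ring
  have hm₀side : m₀ ∈ GeodSide σb xb yb := by
    refine ⟨u - u₁, ⟨by linarith, by rw [hdxy]; linarith⟩, ?_⟩
    show f' (u₁ + (u - u₁)) = m₀
    rw [show u₁ + (u - u₁) = u by ring]; exact hm₀
  obtain ⟨g₁, hg₁⟩ := geodY yb yp
  obtain ⟨h₁, hh₁⟩ := geodY xb yp
  have slim1 := (hypY xb yb yp σb g₁ h₁ hσb hg₁ hh₁).1 m₀ hm₀side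
  have hU1ne : (GeodSide g₁ yb yp ∪ GeodSide h₁ xb yp).Nonempty :=
    ⟨yb, Or.inl (mem_side_left hg₁)⟩
  obtain ⟨m₁, hm₁U, hdm₁⟩ := (Metric.infDist_lt_iff hU1ne).1
    (lt_of_le_of_lt slim1 (by linarith : δ < δ + 1))
  rcases hm₁U with hm₁g | hm₁h
  · -- m₁ close to the short right connector: R is small
    have h1 := hfar₂ m₁ (dist_start_of_mem_side hg₁ hm₁g)
    have hRz := (Rzero_big hδ hlam heps).2
    linarith
  · -- main case
    obtain ⟨g₂, hg₂⟩ := geodY yp xp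
    obtain ⟨h₂, hh₂⟩ := geodY xb xp
    have slim2 := (hypY xb yp xp h₁ g₂ h₂ hh₁ hg₂ hh₂).1 m₁ hm₁h
    have hU2ne : (GeodSide g₂ yp xp ∪ GeodSide h₂ xb xp).Nonempty :=
      ⟨yp, Or.inl (mem_side_left hg₂)⟩
    obtain ⟨m₂, hm₂U, hdm₂⟩ := (Metric.infDist_lt_iff hU2ne).1
      (lt_of_le_of_lt slim2 (by linarith : δ < δ + 1))
    rcases hm₂U with hm₂g | hm₂h
    swap
    · -- m₂ close to the short left connector: R is small
      have h1 := hfar₁ m₂ (dist_start_of_mem_side hh₂ hm₂h)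
      have h2 : dist m₀ m₂ ≤ dist m₀ m₁ + dist m₁ m₂ := dist_triangle _ _ _
      have hRz := (Rzero_big hδ hlam heps).2
      linarith
    · -- the chain argument
      have hdm₀m₂ : dist m₀ m₂ < 2*δ + 2 := by
        have := dist_triangle m₀ m₁ m₂
        linarith
      obtain ⟨Δ, hΔdef⟩ : ∃ d : ℝ, d = s₁ - s₂ := ⟨_, rfl⟩
      obtain ⟨N, hN0, hΔN, hNΔ⟩ : ∃ N : ℕ, 0 < N ∧ |Δ| ≤ (N:ℝ) ∧ (N:ℝ) < |Δ| + 2 := by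
        refine ⟨⌈|Δ|⌉₊ + 1, Nat.succ_pos _, ?_, ?_⟩
        · push_cast; linarith [Nat.le_ceil |Δ|]
        · push_cast; linarith [Nat.ceil_lt_add_one (abs_nonneg Δ)]
      have hN0' : (0:ℝ) < N := by exact_mod_cast hN0
      obtain ⟨p, hpdef⟩ : ∃ p : ℕ → Y, p = fun i : ℕ => γ (s₂ + (i:ℝ) * Δ / (N:ℝ)) := ⟨_, rfl⟩
      have hparam : ∀ i : ℕ, i ≤ N → s₂ + i * Δ / N ∈ Set.Icc (0:ℝ) L := by
        intro i hi
        have hθ0 : (0:ℝ) ≤ (i:ℝ)/N := by positivity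
        have hθ1 : (i:ℝ)/N ≤ 1 := by
          rw [div_le_one hN0']; exact_mod_cast hi
        have hval : s₂ + i * Δ / N = (1 - (i:ℝ)/N) * s₂ + ((i:ℝ)/N) * s₁ := by
          field_simp [hΔdef]; rw [hΔdef]; ring
        rw [hval]
        constructor
        · nlinarith [hs₁.1, hs₂.1]
        · nlinarith [hs₁.2, hs₂.2]
      have hp0 : p 0 = yp := by
        simp only [hpdef, hypdef]
        norm_num
      have harg : s₂ + (N:ℝ) * Δ / N = s₁ := by
        rw [hΔdef]
        field_simp
        ring
      have hpN : p N = xp := by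
        simp only [hpdef, hxpdef]
        rw [harg]
      have hgaps : ∀ i < N, dist (p i) (p (i+1)) ≤ lam + eps := by
        intro i hi
        have h1 := hparam i (le_of_lt hi)
        have h2 := hparam (i+1) hi
        simp only [hpdef]
        have := (hγ _ h1 _ h2).2
        have hdiff : |s₂ + i * Δ / N - (s₂ + (i+1 : ℕ) * Δ / N)| = |Δ| / N := by
          push_cast
          rw [show s₂ + (i:ℝ) * Δ / N - (s₂ + ((i:ℝ)+1) * Δ / N) = -(Δ / N) by ring]
          rw [abs_neg, abs_div, abs_of_pos hN0']
        rw [hdiff] at this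
        have hle1 : |Δ| / N ≤ 1 := by rw [div_le_one hN0']; exact hΔN
        have h4 : lam * (|Δ| / N) ≤ lam * 1 := mul_le_mul_of_nonneg_left hle1 (by linarith)
        linarith
      have hfarp : ∀ i : ℕ, i ≤ N → R ≤ dist m₀ (p i) := by
        intro i hi
        have hpi : p i = γ (s₂ + i * Δ / N) := by simp only [hpdef]
        rw [hpi]
        exact hZfar _ ⟨_, hparam i hi, rfl⟩
      obtain ⟨k, hkdef⟩ : ∃ k : ℕ, k = Nat.clog 2 N := ⟨_, rfl⟩
      have hNk : N ≤ 2 ^ k := by rw [hkdef]; exact Nat.le_pow_clog one_lt_two N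
      have hg₂' : IsGeodesic g₂ (p 0) (p N) := by rw [hp0, hpN]; exact hg₂
      have hm₂side : m₂ ∈ GeodSide g₂ (p 0) (p N) := by rw [hp0, hpN]; exact hm₂g
      have hchain := chainA hδ geodY hypY (d₀ := lam + eps) (by linarith) k N hNk p hgaps
        g₂ hg₂' m₂ hm₂side
      have hlower : R - (2*δ + 2) ≤ Metric.infDist m₂ (p '' Set.Iic N) := by
        refine myLeInfDist (s := p '' Set.Iic N)
          ⟨p 0, ⟨0, Set.mem_Iic.mpr (Nat.zero_le _), rfl⟩⟩ ?_
        rintro _ ⟨i, hi, rfl⟩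
        have h1 := hfarp i (Set.mem_Iic.mp hi)
        have h2 := dist_triangle m₀ m₂ (p i)
        linarith
      have hRk : R ≤ (k:ℝ) * δ + (lam + eps) + 2*δ + 2 := by linarith
      -- bound k
      rcases Nat.lt_or_ge N 2 with hN1 | hN2
      · have hN1' : N = 1 := by omega
        have hk0 : k = 0 := by rw [hkdef, hN1']; simp
        rw [hk0] at hRk
        have hRz := (Rzero_big hδ hlam heps).2
        push_cast at hRk
        linarith
      · have hk1 : 1 ≤ k := by rw [hkdef]; exact Nat.clog_pos one_lt_two hN2
        have h2k : 2 ^ (k - 1) < N := by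
          rw [hkdef]
          exact Nat.pow_pred_clog_lt_self one_lt_two (by omega)
        have hsq : (k - 1 + 1)^2 ≤ 4 * 2^(k-1) := sq_le_four_two_pow (k-1)
        have hsqk : k^2 < 4 * N := by
          have hk' : k - 1 + 1 = k := by omega
          rw [hk'] at hsq
          omega
        have hsqkR : (k:ℝ)^2 < 4 * N := by exact_mod_cast hsqk
        have hΔbound : |Δ| ≤ lam * (6*R + 2 + eps) := by
          have hdxpyp : dist xp yp ≤ 6*R + 2 := by
            have ht := dist_triangle xp xb yp
            have ht2 := dist_triangle xb yb yp
            have e1 : dist xp xb ≤ R + 1 := by rw [dist_comm]; exact hdx'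
            have e2 : dist yb yp ≤ R + 1 := hdy'
            have e3 : dist xb yb ≤ 4*R := by rw [hdxy]; linarith
            linarith
          have := (hγ s₁ hs₁ s₂ hs₂).1
          have habs : |s₁ - s₂| / lam - eps ≤ 6*R + 2 := by
            calc |s₁ - s₂| / lam - eps ≤ dist (γ s₁) (γ s₂) := this
              _ = dist xp yp := rfl
              _ ≤ 6*R + 2 := hdxpyp
          have : |Δ| / lam ≤ 6*R + 2 + eps := by rw [hΔdef]; linarith
          calc |Δ| = (|Δ| / lam) * lam := by field_simp
            _ ≤ (6*R + 2 + eps) * lam := by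
                apply mul_le_mul_of_nonneg_right this (le_of_lt hlam0)
            _ = lam * (6*R + 2 + eps) := by ring
        -- quadratic bound on k
        set A := 24*lam*δ with hAdef
        set B := 4*lam*(6*(lam+eps)+12*δ+14+eps) + 8 with hBdef
        have hA0 : 0 ≤ A := by positivity
        have hB0 : 0 ≤ B := by nlinarith
        have hquad : (k:ℝ)^2 < A * k + B := by
          have h1 : (k:ℝ)^2 < 4 * (|Δ| + 2) := by linarith
          have h2 : |Δ| ≤ lam * (6*((k:ℝ)*δ + (lam+eps) + 2*δ + 2) + 2 + eps) := by
            apply hΔbound.trans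
            apply mul_le_mul_of_nonneg_left _ (le_of_lt hlam0)
            linarith
          rw [hAdef, hBdef]
          nlinarith
        have hkreal : (1:ℝ) ≤ k := by exact_mod_cast hk1
        have hkAB : (k:ℝ) ≤ A + B := by nlinarith
        have hfinal : R ≤ (A + B) * δ + (lam + eps) + 2*δ + 2 := by nlinarith
        rw [Rzero, ← hAdef]
        have : (24*lam*δ + (4*lam*(6*(lam+eps)+12*δ+14+eps) + 8)) = A + B := by
          rw [hAdef, hBdef]
        rw [this]
        linarith

noncomputable def Rone (δ lam eps : ℝ) : ℝ :=
  lam*lam*(2*Rzero δ lam eps + 4 + eps) + eps + Rzero δ lam eps + 2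

set_option maxHeartbeats 1000000 in
lemma morse_full {Y : Type*} [MetricSpace Y] {δ lam eps : ℝ} (hδ : 0 ≤ δ)
    (hlam : 1 ≤ lam) (heps : 0 ≤ eps)
    (geodY : GeodesicSpace Y) (hypY : DeltaHyperbolic Y δ)
    {L : ℝ} (hL : 0 ≤ L) {γ : ℝ → Y} (hγ : IsQuasigeodesic lam eps γ L)
    {f' : ℝ → Y} (hf' : IsGeodesic f' (γ 0) (γ L)) :
    ∀ t ∈ Set.Icc (0:ℝ) L,
      Metric.infDist (γ t) (GeodSide f' (γ 0) (γ L)) ≤ Rone δ lam eps := by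
  intro t ht
  have hlam0 : (0:ℝ) < lam := by linarith
  set D' := dist (γ 0) (γ L) with hD'
  have hD'0 : 0 ≤ D' := dist_nonneg
  set Z₁ := γ '' Set.Icc (0:ℝ) t with hZ₁
  set Z₂ := γ '' Set.Icc t L with hZ₂
  have hZ₁ne : Z₁.Nonempty := ⟨γ 0, 0, ⟨le_refl _, ht.1⟩, rfl⟩
  have hZ₂ne : Z₂.Nonempty := ⟨γ t, t, ⟨le_refl _, ht.2⟩, rfl⟩
  have hcont : ContinuousOn f' (Set.Icc 0 D') := by
    refine (LipschitzOnWith.of_dist_le_mul (K := 1) ?_).continuousOn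
    intro x hx y hy
    rw [hf'.2.2 x hx y hy, Real.dist_eq]
    simp
  set gfun : ℝ → ℝ := fun v => Metric.infDist (f' v) Z₁ - Metric.infDist (f' v) Z₂ with hgfun
  have hgc : ContinuousOn gfun (Set.Icc 0 D') :=
    (((Metric.continuous_infDist_pt Z₁).comp_continuousOn hcont).sub
      ((Metric.continuous_infDist_pt Z₂).comp_continuousOn hcont))
  have hg0 : gfun 0 ≤ 0 := by
    have h1 : Metric.infDist (f' 0) Z₁ ≤ dist (f' 0) (γ 0) :=
      Metric.infDist_le_dist_of_mem ⟨0, ⟨le_refl _, ht.1⟩, rfl⟩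
    have h1' : dist (f' 0) (γ 0) = 0 := by rw [hf'.1, dist_self]
    rw [h1'] at h1
    have h2 : 0 ≤ Metric.infDist (f' 0) Z₂ := Metric.infDist_nonneg
    simp only [hgfun]
    linarith
  have hgD : 0 ≤ gfun D' := by
    have h1 : Metric.infDist (f' D') Z₂ ≤ dist (f' D') (γ L) :=
      Metric.infDist_le_dist_of_mem ⟨L, ⟨ht.2, le_refl _⟩, rfl⟩
    have h1' : dist (f' D') (γ L) = 0 := by rw [hf'.2.1, dist_self]
    rw [h1'] at h1
    have h2 : 0 ≤ Metric.infDist (f' D') Z₁ := Metric.infDist_nonneg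
    simp only [hgfun]
    linarith
  obtain ⟨v, hv, hgv⟩ := intermediate_value_Icc hD'0 hgc ⟨hg0, hgD⟩
  have hmem : f' v ∈ GeodSide f' (γ 0) (γ L) := ⟨v, hv, rfl⟩
  have h1 := morse_upper hδ hlam heps geodY hypY hL hγ hf' (f' v) hmem
  have hZne : (γ '' Set.Icc (0:ℝ) L).Nonempty := ⟨γ 0, 0, ⟨le_refl _, hL⟩, rfl⟩
  have hsplit : γ '' Set.Icc (0:ℝ) L = Z₁ ∪ Z₂ := by
    rw [hZ₁, hZ₂, ← Set.image_union, Set.Icc_union_Icc_eq_Icc ht.1 ht.2]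
  obtain ⟨z, hz, hdz⟩ := (Metric.infDist_lt_iff hZne).1
    (lt_of_le_of_lt h1 (by linarith : Rzero δ lam eps < Rzero δ lam eps + 1))
  rw [hsplit] at hz
  have hgveq : Metric.infDist (f' v) Z₁ = Metric.infDist (f' v) Z₂ := by
    have : gfun v = 0 := hgv
    simp only [hgfun] at this
    linarith
  have hboth1 : Metric.infDist (f' v) Z₁ < Rzero δ lam eps + 1 := by
    rcases hz with hz | hz
    · exact lt_of_le_of_lt (Metric.infDist_le_dist_of_mem hz) hdz
    · rw [hgveq]
      exact lt_of_le_of_lt (Metric.infDist_le_dist_of_mem hz) hdz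
  have hboth2 : Metric.infDist (f' v) Z₂ < Rzero δ lam eps + 1 := by
    rw [← hgveq]; exact hboth1
  obtain ⟨z₁, hz₁, hdz₁⟩ := (Metric.infDist_lt_iff hZ₁ne).1 hboth1
  obtain ⟨z₂, hz₂, hdz₂⟩ := (Metric.infDist_lt_iff hZ₂ne).1 hboth2
  obtain ⟨s₁, hs₁, rfl⟩ := hz₁
  obtain ⟨s₂, hs₂, rfl⟩ := hz₂
  have hs₁mem : s₁ ∈ Set.Icc (0:ℝ) L := ⟨hs₁.1, hs₁.2.trans ht.2⟩
  have hs₂mem : s₂ ∈ Set.Icc (0:ℝ) L := ⟨ht.1.trans hs₂.1, hs₂.2⟩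
  have hdz₁z₂ : dist (γ s₁) (γ s₂) ≤ 2 * Rzero δ lam eps + 2 := by
    have := dist_triangle (γ s₁) (f' v) (γ s₂)
    rw [dist_comm (γ s₁) (f' v)] at this
    linarith
  have hlow := (hγ s₁ hs₁mem s₂ hs₂mem).1
  have habs : |s₁ - s₂| ≤ lam * (2 * Rzero δ lam eps + 2 + eps) := by
    have h3 : |s₁ - s₂| / lam ≤ 2 * Rzero δ lam eps + 2 + eps := by linarith
    calc |s₁ - s₂| = (|s₁ - s₂| / lam) * lam := by field_simp
      _ ≤ (2 * Rzero δ lam eps + 2 + eps) * lam :=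
          mul_le_mul_of_nonneg_right h3 (le_of_lt hlam0)
      _ = lam * (2 * Rzero δ lam eps + 2 + eps) := by ring
  have htms : |t - s₁| ≤ |s₁ - s₂| := by
    rw [abs_of_nonneg (by linarith [hs₁.2] : 0 ≤ t - s₁),
      abs_of_nonpos (by linarith [hs₁.2, hs₂.1] : s₁ - s₂ ≤ 0)]
    have := hs₂.1
    linarith
  have hup := (hγ t ht s₁ hs₁mem).2
  have hds : dist (γ t) (γ s₁) ≤ lam * (lam * (2 * Rzero δ lam eps + 2 + eps)) + eps := by
    have h4 : lam * |t - s₁| ≤ lam * (lam * (2 * Rzero δ lam eps + 2 + eps)) :=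
      mul_le_mul_of_nonneg_left (htms.trans habs) (le_of_lt hlam0)
    linarith
  have hfin : Metric.infDist (γ t) (GeodSide f' (γ 0) (γ L)) ≤ dist (γ t) (f' v) :=
    Metric.infDist_le_dist_of_mem hmem
  have htri : dist (γ t) (f' v) ≤ dist (γ t) (γ s₁) + dist (γ s₁) (f' v) := dist_triangle _ _ _
  rw [dist_comm (γ s₁) (f' v)] at htri
  have hRz0 : 0 ≤ Rzero δ lam eps := by
    have := (Rzero_big hδ hlam heps).2
    unfold Rzero at *
    nlinarith [(Rzero_big hδ hlam heps).1]
  unfold Rone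
  nlinarith [mul_le_mul_of_nonneg_left (le_refl (2 * Rzero δ lam eps + 2 + eps))
    (mul_nonneg (le_of_lt hlam0) (le_of_lt hlam0))]

lemma Rone_nonneg {δ lam eps : ℝ} (hδ : 0 ≤ δ) (hlam : 1 ≤ lam) (heps : 0 ≤ eps) :
    0 ≤ Rone δ lam eps := by
  have h1 := (Rzero_big hδ hlam heps).1
  have h2 := (Rzero_big hδ hlam heps).2
  have hRz0 : 0 ≤ Rzero δ lam eps := by unfold Rzero at *; nlinarith
  unfold Rone
  nlinarith

lemma push_side {X Y : Type*} [MetricSpace X] [MetricSpace Y] {δ lam eps : ℝ}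
    (hδ : 0 ≤ δ) (hlam : 1 ≤ lam) (heps : 0 ≤ eps)
    (geodY : GeodesicSpace Y) (hypY : DeltaHyperbolic Y δ)
    {φ : X → Y} (hφ : QIEmbedding lam eps φ)
    {a b : X} {f : ℝ → X} (hf : IsGeodesic f a b)
    {p : X} (hp : Metric.infDist p (GeodSide f a b) ≤ 5 * δ)
    {f' : ℝ → Y} (hf' : IsGeodesic f' (φ a) (φ b)) :
    Metric.infDist (φ p) (GeodSide f' (φ a) (φ b)) ≤ lam*(5*δ+1) + eps + Rone δ lam eps := by
  have hlam0 : (0:ℝ) < lam := by linarith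
  set L := dist a b with hLdef
  have hL : 0 ≤ L := dist_nonneg
  set γqg : ℝ → Y := fun s => φ (f s) with hγdef
  have hγ : IsQuasigeodesic lam eps γqg L := by
    intro s hs t htt
    have hd := hf.2.2 s hs t htt
    have h := hφ (f s) (f t)
    rw [hd] at h
    exact h
  have h0 : γqg 0 = φ a := by simp only [hγdef]; rw [hf.1]
  have hE : γqg L = φ b := by simp only [hγdef]; rw [hf.2.1]
  rw [← h0, ← hE] at hf'
  obtain ⟨x, hx, hdx⟩ := (Metric.infDist_lt_iff (side_nonempty hf)).1
    (lt_of_le_of_lt hp (by linarith : 5*δ < 5*δ+1))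
  obtain ⟨t, htt, rfl⟩ := hx
  have hfull := morse_full hδ hlam heps geodY hypY hL hγ hf' t htt
  rw [h0, hE] at hfull
  have htri : Metric.infDist (φ p) (GeodSide f' (φ a) (φ b))
      ≤ Metric.infDist (γqg t) (GeodSide f' (φ a) (φ b)) + dist (φ p) (γqg t) :=
    Metric.infDist_le_infDist_add_dist
  have hqd : dist (φ p) (γqg t) ≤ lam * dist p (f t) + eps := (hφ p (f t)).2
  have hmul : lam * dist p (f t) ≤ lam * (5*δ+1) :=
    mul_le_mul_of_nonneg_left (le_of_lt hdx) (le_of_lt hlam0)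
  linarith

/-- Quasi-isometric embeddings coarsely preserve quasi-centers of geodesic triangles. -/
theorem qie_preserves_quasicenters :
    ∀ δ lam eps : ℝ, 0 ≤ δ → 1 ≤ lam → 0 ≤ eps →
      ∃ C : ℝ, 0 ≤ C ∧
        ∀ (X Y : Type) [MetricSpace X] [MetricSpace Y],
          GeodesicSpace X → DeltaHyperbolic X δ →
          GeodesicSpace Y → DeltaHyperbolic Y δ →
          ∀ φ : X → Y, QIEmbedding lam eps φ →
            ∀ (a b c : X) (f g h : ℝ → X),
              IsGeodesic f a b → IsGeodesic g b c → IsGeodesic h a c →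
              ∀ p : X,
                Metric.infDist p (GeodSide f a b) ≤ 5 * δ →
                Metric.infDist p (GeodSide g b c) ≤ 5 * δ →
                Metric.infDist p (GeodSide h a c) ≤ 5 * δ →
                ∀ f' g' h' : ℝ → Y,
                  IsGeodesic f' (φ a) (φ b) → IsGeodesic g' (φ b) (φ c) →
                  IsGeodesic h' (φ a) (φ c) →
                    Metric.infDist (φ p) (GeodSide f' (φ a) (φ b)) ≤ C ∧
                    Metric.infDist (φ p) (GeodSide g' (φ b) (φ c)) ≤ C ∧
                    Metric.infDist (φ p) (GeodSide h' (φ a) (φ c)) ≤ C := by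
  intro δ lam eps hδ hlam heps
  refine ⟨lam*(5*δ+1) + eps + Rone δ lam eps, ?_, ?_⟩
  · have h1 := Rone_nonneg hδ hlam heps
    nlinarith
  · intro X Y _ _ geodX hypX geodY hypY φ hφ a b c f g h hf hg hh p hpf hpg hph f' g' h'
      hf' hg' hh'
    exact ⟨push_side hδ hlam heps geodY hypY hφ hf hpf hf',
      push_side hδ hlam heps geodY hypY hφ hg hpg hg',
      push_side hδ hlam heps geodY hypY hφ hh hph hh'⟩
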